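/- Let G = A^t ⋊ H where A is a finite faithful irreducible H-module and t ≥ 1, written G = (A_1 × ... × A_t) ⋊ H with each A_i ≅_H A. For each i, the subgroup M_i = (∏_{j≠i} A_j) ⋊ H is a maximal subgroup of G, and ∩_{i≤t−1} M_i ≅ A ⋊ H. -/
import Mathlib


namespace Stmt16

/-- The action of `H` on `A` by additive automorphisms, packaged as a homomorphism
`H →* MulAut (Multiplicative A)`, used to form the semidirect product `A ⋊ H`. -/
def mulAutOfSMul (H A : Type*) [Group H] [AddCommGroup A] [DistribMulAction H A] :
    H →* MulAut (Multiplicative A) where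
  toFun h :=
    { toFun := fun a => Multiplicative.ofAdd (h • a.toAdd)
      invFun := fun a => Multiplicative.ofAdd (h⁻¹ • a.toAdd)
      left_inv := fun a => by simp
      right_inv := fun a => by simp
      map_mul' := fun a b => by simp [smul_add, ofAdd_add] }
  map_one' := by ext a; simp
  map_mul' g h := by ext a; simp [mul_smul]

private lemma aux_mul {N G' : Type*} [AddCommGroup N] [Group G']
    (φ : G' →* MulAut (Multiplicative N)) (x y : N) :
    (SemidirectProduct.inl (Multiplicative.ofAdd x) : Multiplicative N ⋊[φ] G') *
      SemidirectProduct.inl (Multiplicative.ofAdd y) =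
      SemidirectProduct.inl (Multiplicative.ofAdd (x + y)) := by
  rw [ofAdd_add, map_mul]

private lemma aux_inv {N G' : Type*} [AddCommGroup N] [Group G']
    (φ : G' →* MulAut (Multiplicative N)) (x : N) :
    (SemidirectProduct.inl (Multiplicative.ofAdd x) : Multiplicative N ⋊[φ] G')⁻¹ =
      SemidirectProduct.inl (Multiplicative.ofAdd (-x)) := by
  rw [ofAdd_neg, map_inv]

/-- Let `G = A^t ⋊ H = (A₁ × ⋯ × A_t) ⋊ H` with `A` a finite
faithful irreducible `H`-module and `t ≥ 1`.  For each `i`, the subgroup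
`M_i = (∏_{j ≠ i} A_j) ⋊ H` is a maximal subgroup of `G`, and
`M₁ ∩ ⋯ ∩ M_{t-1} ≅ A ⋊ H`. -/
theorem Mi_maximal_and_inf_iso
    (H A : Type*) [Group H] [Finite H] [AddCommGroup A] [Finite A] [Nontrivial A]
    [DistribMulAction H A] [FaithfulSMul H A]
    (hirr : ∀ W : AddSubgroup A, (∀ h : H, ∀ a ∈ W, h • a ∈ W) → W = ⊥ ∨ W = ⊤)
    (t : ℕ) (ht : 1 ≤ t)
    (M : Fin t → Subgroup (Multiplicative (Fin t → A) ⋊[mulAutOfSMul H (Fin t → A)] H))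
    (hM : ∀ (i : Fin t) (g : Multiplicative (Fin t → A) ⋊[mulAutOfSMul H (Fin t → A)] H),
      g ∈ M i ↔ Multiplicative.toAdd g.left i = 0) :
    (∀ i : Fin t, IsCoatom (M i)) ∧
      Nonempty ((↥(⨅ i : {j : Fin t // (j : ℕ) < t - 1}, M i.1)) ≃*
        (Multiplicative A ⋊[mulAutOfSMul H A] H)) := by
  have hφ_apply : ∀ (h : H) (a : Multiplicative (Fin t → A)),
      mulAutOfSMul H (Fin t → A) h a = Multiplicative.ofAdd (h • Multiplicative.toAdd a) :=
    fun _ _ => rfl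
  constructor
  · intro i
    constructor
    · -- M i ≠ ⊤
      intro htop
      obtain ⟨a, ha⟩ := exists_ne (0 : A)
      have hmem : (SemidirectProduct.inl (Multiplicative.ofAdd (Pi.single i a)) :
          Multiplicative (Fin t → A) ⋊[mulAutOfSMul H (Fin t → A)] H) ∈ M i := by
        rw [htop]; trivial
      rw [hM] at hmem
      simp only [SemidirectProduct.left_inl, toAdd_ofAdd, Pi.single_eq_same] at hmem
      exact ha hmem
    · intro K hK
      have key : ∀ g : Multiplicative (Fin t → A) ⋊[mulAutOfSMul H (Fin t → A)] H, g ∈ K →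
          (SemidirectProduct.inl (Multiplicative.ofAdd
            (Pi.single i (Multiplicative.toAdd g.left i))) :
            Multiplicative (Fin t → A) ⋊[mulAutOfSMul H (Fin t → A)] H) ∈ K := by
        intro g hg
        have h1 : (SemidirectProduct.inr g.right⁻¹ :
            Multiplicative (Fin t → A) ⋊[mulAutOfSMul H (Fin t → A)] H) ∈ K := by
          refine hK.le ?_
          rw [hM]; simp
        have h2 : SemidirectProduct.inl g.left ∈ K := by
          have hmul := K.mul_mem hg h1
          have heq : g * SemidirectProduct.inr g.right⁻¹ =
              SemidirectProduct.inl g.left := by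
            ext <;> simp [SemidirectProduct.mul_left, SemidirectProduct.mul_right]
          rwa [heq] at hmul
        have h3 : (SemidirectProduct.inl (Multiplicative.ofAdd
            (Pi.single i (Multiplicative.toAdd g.left i) - Multiplicative.toAdd g.left)) :
            Multiplicative (Fin t → A) ⋊[mulAutOfSMul H (Fin t → A)] H) ∈ K := by
          refine hK.le ?_
          rw [hM]
          simp only [SemidirectProduct.left_inl, toAdd_ofAdd, Pi.sub_apply,
            Pi.single_eq_same, sub_self]
        rw [show SemidirectProduct.inl g.left = (SemidirectProduct.inl
            (Multiplicative.ofAdd (Multiplicative.toAdd g.left)) :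
            Multiplicative (Fin t → A) ⋊[mulAutOfSMul H (Fin t → A)] H) by
          rw [ofAdd_toAdd]] at h2
        have hmul := K.mul_mem h2 h3
        rw [aux_mul] at hmul
        have harg : Multiplicative.toAdd g.left +
            (Pi.single i (Multiplicative.toAdd g.left i) - Multiplicative.toAdd g.left)
            = Pi.single i (Multiplicative.toAdd g.left i) := by
          abel
        rwa [harg] at hmul
      set W : AddSubgroup A :=
        { carrier := {a : A | (SemidirectProduct.inl (Multiplicative.ofAdd (Pi.single i a)) :
            Multiplicative (Fin t → A) ⋊[mulAutOfSMul H (Fin t → A)] H) ∈ K}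
          zero_mem' := by
            simp only [Set.mem_setOf_eq, Pi.single_zero, ofAdd_zero, map_one]
            exact K.one_mem
          add_mem' := by
            intro a b ha hb
            have hmul := K.mul_mem ha hb
            rwa [aux_mul, ← Pi.single_add] at hmul
          neg_mem' := by
            intro a ha
            have hinv := K.inv_mem ha
            rwa [aux_inv, ← Pi.single_neg] at hinv } with hWdef
      have hWinv : ∀ h : H, ∀ a ∈ W, h • a ∈ W := by
        intro h a ha
        have hinr : (SemidirectProduct.inr h :
            Multiplicative (Fin t → A) ⋊[mulAutOfSMul H (Fin t → A)] H) ∈ K := by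
          refine hK.le ?_; rw [hM]; simp
        have hconj := K.mul_mem (K.mul_mem hinr ha) (K.inv_mem hinr)
        rw [show (SemidirectProduct.inr h :
            Multiplicative (Fin t → A) ⋊[mulAutOfSMul H (Fin t → A)] H)⁻¹ =
            SemidirectProduct.inr h⁻¹ from (map_inv _ _).symm,
          ← SemidirectProduct.inl_aut] at hconj
        have heq : mulAutOfSMul H (Fin t → A) h (Multiplicative.ofAdd (Pi.single i a)) =
            Multiplicative.ofAdd (Pi.single i (h • a)) := by
          rw [hφ_apply]
          congr 1
          simp only [toAdd_ofAdd]
          ext j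
          by_cases hj : j = i
          · subst hj; simp [Pi.smul_apply]
          · simp [Pi.single_eq_of_ne hj, Pi.smul_apply]
        rwa [heq] at hconj
      rcases hirr W hWinv with hbot | htop
      · obtain ⟨g, hgK, hgM⟩ := SetLike.exists_of_lt hK
        have hmemW : Multiplicative.toAdd g.left i ∈ W := key g hgK
        rw [hbot] at hmemW
        simp only [AddSubgroup.mem_bot] at hmemW
        exact absurd ((hM i g).mpr hmemW) hgM
      · rw [eq_top_iff]
        intro x _
        have hx1 : (SemidirectProduct.inl (Multiplicative.ofAdd
            (Multiplicative.toAdd x.left - Pi.single i (Multiplicative.toAdd x.left i))) :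
            Multiplicative (Fin t → A) ⋊[mulAutOfSMul H (Fin t → A)] H) ∈ K := by
          refine hK.le ?_
          rw [hM]
          simp only [SemidirectProduct.left_inl, toAdd_ofAdd, Pi.sub_apply,
            Pi.single_eq_same, sub_self]
        have hx2 : (SemidirectProduct.inl (Multiplicative.ofAdd
            (Pi.single i (Multiplicative.toAdd x.left i))) :
            Multiplicative (Fin t → A) ⋊[mulAutOfSMul H (Fin t → A)] H) ∈ K := by
          have hw : Multiplicative.toAdd x.left i ∈ W := by rw [htop]; trivial
          exact hw
        have hx3 : (SemidirectProduct.inr x.right :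
            Multiplicative (Fin t → A) ⋊[mulAutOfSMul H (Fin t → A)] H) ∈ K := by
          refine hK.le ?_; rw [hM]; simp
        have hmul := K.mul_mem (K.mul_mem hx1 hx2) hx3
        rw [aux_mul] at hmul
        have harg : Multiplicative.toAdd x.left - Pi.single i (Multiplicative.toAdd x.left i)
            + Pi.single i (Multiplicative.toAdd x.left i) = Multiplicative.toAdd x.left := by
          abel
        rw [harg, ofAdd_toAdd, SemidirectProduct.inl_left_mul_inr_right] at hmul
        exact hmul
  · -- the isomorphism
    have hlt : t - 1 < t := by omega
    set last : Fin t := ⟨t - 1, hlt⟩ with hlast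
    have hmem_inf : ∀ g : Multiplicative (Fin t → A) ⋊[mulAutOfSMul H (Fin t → A)] H,
        g ∈ (⨅ i : {j : Fin t // (j : ℕ) < t - 1}, M i.1) ↔
          ∀ j : Fin t, (j : ℕ) < t - 1 → Multiplicative.toAdd g.left j = 0 := by
      intro g
      rw [Subgroup.mem_iInf]
      constructor
      · intro h j hj; exact (hM j g).mp (h ⟨j, hj⟩)
      · intro h j; exact (hM j.1 g).mpr (h j.1 j.2)
    have hsingle : ∀ g : Multiplicative (Fin t → A) ⋊[mulAutOfSMul H (Fin t → A)] H,
        g ∈ (⨅ i : {j : Fin t // (j : ℕ) < t - 1}, M i.1) →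
          Multiplicative.toAdd g.left =
            Pi.single last (Multiplicative.toAdd g.left last) := by
      intro g hg
      ext j
      by_cases hj : j = last
      · subst hj; simp
      · have hne : (j : ℕ) ≠ t - 1 := fun h => hj (Fin.ext h)
        have hjlt : (j : ℕ) < t - 1 := by
          have := j.2; omega
        rw [(hmem_inf g).mp hg j hjlt, Pi.single_eq_of_ne hj]
    refine ⟨{
      toFun := fun x =>
        ⟨Multiplicative.ofAdd (Multiplicative.toAdd
          (x : Multiplicative (Fin t → A) ⋊[mulAutOfSMul H (Fin t → A)] H).left last),
          (x : Multiplicative (Fin t → A) ⋊[mulAutOfSMul H (Fin t → A)] H).right⟩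
      invFun := fun p =>
        ⟨⟨Multiplicative.ofAdd (Pi.single last (Multiplicative.toAdd p.left)), p.right⟩, ?_⟩
      left_inv := ?_
      right_inv := ?_
      map_mul' := ?_ }⟩
    · rw [hmem_inf]
      intro j hj
      have hj' : j ≠ last := by
        intro h; rw [h] at hj; simp [hlast] at hj
      simp [Pi.single_eq_of_ne hj']
    · intro x
      apply Subtype.ext
      apply SemidirectProduct.ext
      · simp only [toAdd_ofAdd]
        exact congrArg Multiplicative.ofAdd (hsingle _ x.2).symm
      · rfl
    · intro p
      apply SemidirectProduct.ext
      · simp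
      · rfl
    · intro x y
      apply SemidirectProduct.ext
      · rfl
      · rfl

end Stmt16
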